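/- Let $\mathbf{A} \in \mathbb{R}^{d \times R}$ be a random matrix whose entries are i.i.d. Rademacher random variables, and let $\mathbf{B} \in \mathbb{R}^{p \times d}$ be a random matrix independent of $\mathbf{A}$ with $\mathbb{E}\|\mathbf{B}\|_F^4 < \infty$. Then $\mathbb{E}\,\|\mathbf{B}\mathbf{A}\|_F^4 \le R^2\, \mathbb{E}\big[\mathrm{tr}(\mathbf{B}^\mathsf{T}\mathbf{B})^2\big] + 2R\, \mathbb{E}\big[\mathrm{tr}\big((\mathbf{B}^\mathsf{T}\mathbf{B})^2\big)\big]$. -/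

import Mathlib

open MeasureTheory ProbabilityTheory Matrix Finset

noncomputable section

/-- The Rademacher distribution on `ℝ`: uniform on `{1, -1}`. -/
def radDist : Measure ℝ :=
  (2⁻¹ : ENNReal) • Measure.dirac (1 : ℝ) + (2⁻¹ : ENNReal) • Measure.dirac (-1 : ℝ)

lemma integrable_id_dirac (a : ℝ) : Integrable id (Measure.dirac a) := by
  refine ⟨measurable_id.aestronglyMeasurable, ?_⟩
  rw [HasFiniteIntegral, lintegral_dirac]
  exact ENNReal.coe_lt_top

lemma radDist_ae_sq : ∀ᵐ x ∂radDist, x ^ 2 = 1 := by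
  rw [ae_iff]
  have h : {x : ℝ | ¬ x ^ 2 = 1} = {x : ℝ | x ^ 2 = 1}ᶜ := rfl
  have hm : MeasurableSet {x : ℝ | x ^ 2 = 1} := measurableSet_eq_fun (by fun_prop) measurable_const
  simp only [radDist, Measure.add_apply, Measure.smul_apply, smul_eq_mul]
  rw [h, Measure.dirac_apply' _ hm.compl, Measure.dirac_apply' _ hm.compl]
  norm_num [Set.indicator]

lemma radDist_integral_x : ∫ x, x ∂radDist = 0 := by
  rw [show ∫ x, x ∂radDist = ∫ x, id x ∂radDist from rfl, radDist,
    integral_add_measure ((integrable_id_dirac 1).smul_measure (by norm_num))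
    ((integrable_id_dirac (-1)).smul_measure (by norm_num)),
    integral_smul_measure, integral_smul_measure, integral_dirac id, integral_dirac id]
  norm_num

section RadMoments

variable {Ω : Type} [MeasurableSpace Ω] {μ : Measure Ω} [IsProbabilityMeasure μ]
  {ι : Type*} {X : ι → Ω → ℝ}

lemma rad_abs_le (hsq : ∀ q, ∀ᵐ ω ∂μ, (X q ω) ^ 2 = 1) (q : ι) : ∀ᵐ ω ∂μ, |X q ω| ≤ 1 := by
  filter_upwards [hsq q] with ω h
  rw [abs_le]; constructor <;> nlinarith

lemma rad_pair_zero (hmeas : ∀ q, Measurable (X q))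
    (hiid : iIndepFun X μ)
    (hmean : ∀ q, ∫ ω, X q ω ∂μ = 0) {a b : ι} (hab : a ≠ b) :
    ∫ ω, X a ω * X b ω ∂μ = 0 := by
  have h := (hiid.indepFun hab).integral_mul_eq_mul_integral (hmeas a).aestronglyMeasurable
    (hmeas b).aestronglyMeasurable
  calc ∫ ω, X a ω * X b ω ∂μ = ∫ ω, (X a * X b) ω ∂μ := rfl
    _ = (∫ ω, X a ω ∂μ) * ∫ ω, X b ω ∂μ := h
    _ = 0 := by rw [hmean a, hmean b]; ring

lemma rad_quad_zero [DecidableEq ι] (hmeas : ∀ q, Measurable (X q))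
    (hiid : iIndepFun X μ)
    (hmean : ∀ q, ∫ ω, X q ω ∂μ = 0) {a b c e : ι} (hab : a ≠ b) (hac : a ≠ c) (hae : a ≠ e)
    (hbc : b ≠ c) (hbe : b ≠ e) (hce : c ≠ e) :
    ∫ ω, X a ω * X b ω * X c ω * X e ω ∂μ = 0 := by
  have hnot : a ∉ ({b, c, e} : Finset ι) := by simp [hab, hac, hae]
  have hP : (∏ j ∈ ({b, c, e} : Finset ι), X j) = fun ω => X b ω * (X c ω * X e ω) := by
    rw [Finset.prod_insert (by simp [hbc, hbe]), Finset.prod_insert (by simp [hce]),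
      Finset.prod_singleton]
    rfl
  have hind : IndepFun (∏ j ∈ ({b, c, e} : Finset ι), X j) (X a) μ :=
    hiid.indepFun_finsetProd_of_notMem hmeas hnot
  have hPm : AEStronglyMeasurable (∏ j ∈ ({b, c, e} : Finset ι), X j) μ := by
    rw [hP]
    exact (((hmeas b).mul ((hmeas c).mul (hmeas e)))).aestronglyMeasurable
  have h := hind.integral_mul_eq_mul_integral hPm (hmeas a).aestronglyMeasurable
  calc ∫ ω, X a ω * X b ω * X c ω * X e ω ∂μ
      = ∫ ω, ((∏ j ∈ ({b, c, e} : Finset ι), X j) * X a) ω ∂μ := by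
        rw [hP]; congr 1; funext ω; simp only [Pi.mul_apply]; ring
    _ = (∫ ω, (∏ j ∈ ({b, c, e} : Finset ι), X j) ω ∂μ) * ∫ ω, X a ω ∂μ := h
    _ = 0 := by rw [show (∫ ω, X a ω ∂μ) = 0 from hmean a]; ring

lemma rad_aux_abs4 {a b c d : ℝ} (ha : |a| ≤ 1) (hb : |b| ≤ 1) (hc : |c| ≤ 1) (hd : |d| ≤ 1) :
    |a * b * c * d| ≤ 1 := by
  calc |a * b * c * d| = |a| * |b| * |c| * |d| := by rw [abs_mul, abs_mul, abs_mul]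
    _ ≤ 1 := mul_le_one₀ (mul_le_one₀ (mul_le_one₀ ha (abs_nonneg b) hb) (abs_nonneg c) hc)
        (abs_nonneg d) hd

lemma rad_quad_int (hmeas : ∀ q, Measurable (X q)) (hsq : ∀ q, ∀ᵐ ω ∂μ, (X q ω) ^ 2 = 1)
    (q1 q2 q3 q4 : ι) :
    Integrable (fun ω => X q1 ω * X q2 ω * X q3 ω * X q4 ω) μ := by
  refine Integrable.mono' (integrable_const 1)
    ((((hmeas q1).mul (hmeas q2)).mul (hmeas q3)).mul (hmeas q4)).aestronglyMeasurable ?_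
  filter_upwards [rad_abs_le hsq q1, rad_abs_le hsq q2, rad_abs_le hsq q3, rad_abs_le hsq q4]
    with ω h1 h2 h3 h4
  rw [Real.norm_eq_abs]
  exact rad_aux_abs4 h1 h2 h3 h4

lemma rad_quad_le_one (hmeas : ∀ q, Measurable (X q)) (hsq : ∀ q, ∀ᵐ ω ∂μ, (X q ω) ^ 2 = 1)
    (q1 q2 q3 q4 : ι) :
    ∫ ω, X q1 ω * X q2 ω * X q3 ω * X q4 ω ∂μ ≤ 1 := by
  have h := rad_quad_int hmeas hsq q1 q2 q3 q4
  calc ∫ ω, X q1 ω * X q2 ω * X q3 ω * X q4 ω ∂μ ≤ ∫ _, (1 : ℝ) ∂μ := by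
        refine integral_mono_ae h (integrable_const 1) ?_
        filter_upwards [rad_abs_le hsq q1, rad_abs_le hsq q2, rad_abs_le hsq q3,
          rad_abs_le hsq q4] with ω h1 h2 h3 h4
        exact le_trans (le_abs_self _) (rad_aux_abs4 h1 h2 h3 h4)
    _ = 1 := by simp

lemma rad_key_zero [DecidableEq ι] (hmeas : ∀ q, Measurable (X q))
    (hiid : iIndepFun X μ)
    (hsq : ∀ q, ∀ᵐ ω ∂μ, (X q ω) ^ 2 = 1)
    (hmean : ∀ q, ∫ ω, X q ω ∂μ = 0) (q1 q2 q3 q4 : ι)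
    (h1 : ¬(q1 = q2 ∧ q3 = q4)) (h2 : ¬(q1 = q3 ∧ q2 = q4)) (h3 : ¬(q1 = q4 ∧ q2 = q3)) :
    ∫ ω, X q1 ω * X q2 ω * X q3 ω * X q4 ω ∂μ = 0 := by
  by_cases h12 : q1 = q2
  · subst h12
    have hq34 : q3 ≠ q4 := fun h => h1 ⟨rfl, h⟩
    have he : (fun ω => X q1 ω * X q1 ω * X q3 ω * X q4 ω) =ᵐ[μ]
        fun ω => X q3 ω * X q4 ω := by
      filter_upwards [hsq q1] with ω h
      have h' : X q1 ω * X q1 ω = 1 := by rw [← sq]; exact h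
      linear_combination X q3 ω * X q4 ω * h'
    rw [integral_congr_ae he]; exact rad_pair_zero hmeas hiid hmean hq34
  by_cases h34 : q3 = q4
  · subst h34
    have he : (fun ω => X q1 ω * X q2 ω * X q3 ω * X q3 ω) =ᵐ[μ]
        fun ω => X q1 ω * X q2 ω := by
      filter_upwards [hsq q3] with ω h
      have h' : X q3 ω * X q3 ω = 1 := by rw [← sq]; exact h
      linear_combination X q1 ω * X q2 ω * h'
    rw [integral_congr_ae he]; exact rad_pair_zero hmeas hiid hmean h12
  by_cases h13 : q1 = q3
  · subst h13
    have hq24 : q2 ≠ q4 := fun h => h2 ⟨rfl, h⟩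
    have he : (fun ω => X q1 ω * X q2 ω * X q1 ω * X q4 ω) =ᵐ[μ]
        fun ω => X q2 ω * X q4 ω := by
      filter_upwards [hsq q1] with ω h
      have h' : X q1 ω * X q1 ω = 1 := by rw [← sq]; exact h
      linear_combination X q2 ω * X q4 ω * h'
    rw [integral_congr_ae he]; exact rad_pair_zero hmeas hiid hmean hq24
  by_cases h14 : q1 = q4
  · subst h14
    have hq23 : q2 ≠ q3 := fun h => h3 ⟨rfl, h⟩
    have he : (fun ω => X q1 ω * X q2 ω * X q3 ω * X q1 ω) =ᵐ[μ]
        fun ω => X q2 ω * X q3 ω := by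
      filter_upwards [hsq q1] with ω h
      have h' : X q1 ω * X q1 ω = 1 := by rw [← sq]; exact h
      linear_combination X q2 ω * X q3 ω * h'
    rw [integral_congr_ae he]; exact rad_pair_zero hmeas hiid hmean hq23
  by_cases h23 : q2 = q3
  · subst h23
    have hq14 : q1 ≠ q4 := h14
    have he : (fun ω => X q1 ω * X q2 ω * X q2 ω * X q4 ω) =ᵐ[μ]
        fun ω => X q1 ω * X q4 ω := by
      filter_upwards [hsq q2] with ω h
      have h' : X q2 ω * X q2 ω = 1 := by rw [← sq]; exact h
      linear_combination X q1 ω * X q4 ω * h'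
    rw [integral_congr_ae he]; exact rad_pair_zero hmeas hiid hmean hq14
  by_cases h24 : q2 = q4
  · subst h24
    have he : (fun ω => X q1 ω * X q2 ω * X q3 ω * X q2 ω) =ᵐ[μ]
        fun ω => X q1 ω * X q3 ω := by
      filter_upwards [hsq q2] with ω h
      have h' : X q2 ω * X q2 ω = 1 := by rw [← sq]; exact h
      linear_combination X q1 ω * X q3 ω * h'
    rw [integral_congr_ae he]; exact rad_pair_zero hmeas hiid hmean h13
  · exact rad_quad_zero hmeas hiid hmean h12 h13 h14 h23 h24 h34

end RadMoments

lemma expand2 (d R : ℕ) (w : Fin d → Fin d → ℝ) (a : Fin d → Fin R → ℝ) :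
    (∑ j, ∑ k1, ∑ k2, w k1 k2 * (a k1 j * a k2 j)) ^ 2
    = ∑ j, ∑ j', ∑ k1, ∑ k2, ∑ k3, ∑ k4,
        (w k1 k2 * w k3 k4) * (a k1 j * a k2 j * a k3 j' * a k4 j') := by
  rw [sq, Finset.sum_mul_sum]
  refine Finset.sum_congr rfl fun j _ => Finset.sum_congr rfl fun j' _ => ?_
  calc (∑ k1, ∑ k2, w k1 k2 * (a k1 j * a k2 j)) * (∑ k3, ∑ k4, w k3 k4 * (a k3 j' * a k4 j'))
      = ∑ k1, ∑ k3, (∑ k2, w k1 k2 * (a k1 j * a k2 j)) * (∑ k4, w k3 k4 * (a k3 j' * a k4 j')) :=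
        Finset.sum_mul_sum _ _ _ _
    _ = ∑ k1, ∑ k3, ∑ k2, ∑ k4, (w k1 k2 * (a k1 j * a k2 j)) * (w k3 k4 * (a k3 j' * a k4 j')) := by
        exact Finset.sum_congr rfl fun k1 _ => Finset.sum_congr rfl fun k3 _ =>
          Finset.sum_mul_sum _ _ _ _
    _ = ∑ k1, ∑ k2, ∑ k3, ∑ k4, (w k1 k2 * (a k1 j * a k2 j)) * (w k3 k4 * (a k3 j' * a k4 j')) :=
        Finset.sum_congr rfl fun k1 _ => Finset.sum_comm
    _ = ∑ k1, ∑ k2, ∑ k3, ∑ k4, (w k1 k2 * w k3 k4) * (a k1 j * a k2 j * a k3 j' * a k4 j') := by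
        exact Finset.sum_congr rfl fun k1 _ => Finset.sum_congr rfl fun k2 _ =>
          Finset.sum_congr rfl fun k3 _ => Finset.sum_congr rfl fun k4 _ => by ring

lemma expand_frob (p d R : ℕ) (b : Fin p → Fin d → ℝ) (a : Fin d → Fin R → ℝ) :
    (∑ i, ∑ j, (∑ k, b i k * a k j) ^ 2) ^ 2
    = ∑ j, ∑ j', ∑ k1, ∑ k2, ∑ k3, ∑ k4,
        ((∑ i, b i k1 * b i k2) * (∑ i, b i k3 * b i k4)) *
        (a k1 j * a k2 j * a k3 j' * a k4 j') := by
  have h1 : ∀ j, (∑ i, (∑ k, b i k * a k j) ^ 2)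
      = ∑ k1, ∑ k2, (∑ i, b i k1 * b i k2) * (a k1 j * a k2 j) := by
    intro j
    calc ∑ i, (∑ k, b i k * a k j) ^ 2
        = ∑ i, ∑ k1, ∑ k2, (b i k1 * b i k2) * (a k1 j * a k2 j) := by
          refine Finset.sum_congr rfl fun i _ => ?_
          rw [sq, Finset.sum_mul_sum]
          exact Finset.sum_congr rfl fun k1 _ => Finset.sum_congr rfl fun k2 _ => by ring
      _ = ∑ k1, ∑ i, ∑ k2, (b i k1 * b i k2) * (a k1 j * a k2 j) := Finset.sum_comm
      _ = ∑ k1, ∑ k2, (∑ i, b i k1 * b i k2) * (a k1 j * a k2 j) := by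
          refine Finset.sum_congr rfl fun k1 _ => ?_
          rw [Finset.sum_comm]
          refine Finset.sum_congr rfl fun k2 _ => ?_
          rw [Finset.sum_mul]
  have h0 : (∑ i, ∑ j, (∑ k, b i k * a k j) ^ 2)
      = ∑ j, ∑ k1, ∑ k2, (∑ i, b i k1 * b i k2) * (a k1 j * a k2 j) := by
    rw [Finset.sum_comm]
    exact Finset.sum_congr rfl fun j _ => h1 j
  rw [h0]
  exact expand2 d R (fun k1 k2 => ∑ i, b i k1 * b i k2) a

/-- For a random `d × R` matrix `A` with i.i.d. Rademacher entries and an independent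
random `p × d` matrix `B` with `𝔼‖B‖_F⁴ < ∞`:
`𝔼‖B A‖_F⁴ ≤ R² 𝔼[tr(Bᵀ B)²] + 2R 𝔼[tr((Bᵀ B)²)]`. -/
theorem rademacher_matrix_prod_fourth_moment_trace_le
    {Ω : Type} [MeasurableSpace Ω] (μ : Measure Ω) [IsProbabilityMeasure μ]
    (d R p : ℕ)
    (A : Ω → Fin d → Fin R → ℝ) (B : Ω → Fin p → Fin d → ℝ)
    (hAmeas : ∀ i j, Measurable (fun ω => A ω i j))
    (hAdist : ∀ i j, Measure.map (fun ω => A ω i j) μ = radDist)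
    (hAiid : iIndepFun
      (fun q : Fin d × Fin R => fun ω => A ω q.1 q.2) μ)
    (hBmeas : Measurable B)
    (hAB : IndepFun A B μ)
    (hBint : Integrable (fun ω => (∑ i, ∑ j, (B ω i j) ^ 2) ^ 2) μ) :
    ∫ ω, (∑ i, ∑ j, ((Matrix.of (B ω) * Matrix.of (A ω)) i j) ^ 2) ^ 2 ∂μ
      ≤ (R : ℝ) ^ 2 * (∫ ω, (Matrix.trace ((Matrix.of (B ω))ᵀ * Matrix.of (B ω))) ^ 2 ∂μ)
        + 2 * R * (∫ ω, Matrix.trace (((Matrix.of (B ω))ᵀ * Matrix.of (B ω)) ^ 2) ∂μ) := by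
  classical
  -- the family of Rademacher entries
  set X : Fin d × Fin R → Ω → ℝ := fun q ω => A ω q.1 q.2 with hX
  have hXmeas : ∀ q : Fin d × Fin R, Measurable (X q) := fun q => hAmeas q.1 q.2
  have hXsq : ∀ q : Fin d × Fin R, ∀ᵐ ω ∂μ, (X q ω) ^ 2 = 1 := by
    intro q
    have h : ∀ᵐ x ∂(Measure.map (fun ω => A ω q.1 q.2) μ), x ^ 2 = 1 := by
      rw [hAdist q.1 q.2]; exact radDist_ae_sq
    exact (ae_map_iff (hAmeas q.1 q.2).aemeasurable
      (measurableSet_eq_fun (by fun_prop) measurable_const)).mp h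
  have hXmean : ∀ q : Fin d × Fin R, ∫ ω, X q ω ∂μ = 0 := by
    intro q
    have h : ∫ ω, X q ω ∂μ = ∫ x, x ∂(Measure.map (fun ω => A ω q.1 q.2) μ) :=
      (integral_map (hAmeas q.1 q.2).aemeasurable aestronglyMeasurable_id).symm
    rw [h, hAdist q.1 q.2, radDist_integral_x]
  -- B-side quantities
  set W : Fin d → Fin d → Ω → ℝ := fun k1 k2 ω => ∑ i, B ω i k1 * B ω i k2 with hWdef
  have hBm : ∀ i k, Measurable fun ω => B ω i k :=
    fun i k => (measurable_pi_apply k).comp ((measurable_pi_apply i).comp hBmeas)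
  have hWm : ∀ k1 k2, Measurable (W k1 k2) :=
    fun k1 k2 => Finset.measurable_sum _ fun i _ => (hBm i k1).mul (hBm i k2)
  have hSnn : ∀ ω, (0:ℝ) ≤ ∑ i, ∑ j, (B ω i j) ^ 2 :=
    fun ω => Finset.sum_nonneg fun i _ => Finset.sum_nonneg fun j _ => sq_nonneg _
  have hWle : ∀ k1 k2 ω, |W k1 k2 ω| ≤ ∑ i, ∑ j, (B ω i j) ^ 2 := by
    intro k1 k2 ω
    calc |W k1 k2 ω| ≤ ∑ i, |B ω i k1 * B ω i k2| := Finset.abs_sum_le_sum_abs _ _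
      _ ≤ ∑ i, ∑ j, (B ω i j) ^ 2 := by
          refine Finset.sum_le_sum fun i _ => ?_
          have h1 : (B ω i k1) ^ 2 ≤ ∑ j, (B ω i j) ^ 2 :=
            Finset.single_le_sum (f := fun j => (B ω i j) ^ 2) (fun j _ => sq_nonneg _)
              (Finset.mem_univ k1)
          have h2 : (B ω i k2) ^ 2 ≤ ∑ j, (B ω i j) ^ 2 :=
            Finset.single_le_sum (f := fun j => (B ω i j) ^ 2) (fun j _ => sq_nonneg _)
              (Finset.mem_univ k2)
          have h3 := abs_mul (B ω i k1) (B ω i k2)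
          nlinarith [sq_nonneg (|B ω i k1| - |B ω i k2|), sq_abs (B ω i k1), sq_abs (B ω i k2),
            abs_nonneg (B ω i k1 * B ω i k2)]
  have hWW : ∀ k1 k2 k3 k4 ω, |W k1 k2 ω * W k3 k4 ω| ≤ (∑ i, ∑ j, (B ω i j) ^ 2) ^ 2 := by
    intro k1 k2 k3 k4 ω
    rw [abs_mul, sq]
    exact mul_le_mul (hWle k1 k2 ω) (hWle k3 k4 ω) (abs_nonneg _) (hSnn ω)
  have hGint : ∀ k1 k2 k3 k4, Integrable (fun ω => W k1 k2 ω * W k3 k4 ω) μ := by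
    intro k1 k2 k3 k4
    refine Integrable.mono' hBint ((hWm k1 k2).mul (hWm k3 k4)).aestronglyMeasurable ?_
    exact Filter.Eventually.of_forall fun ω => by
      rw [Real.norm_eq_abs]; exact hWW k1 k2 k3 k4 ω
  -- the basic integrals
  set t : Fin d → Fin d → Fin d → Fin d → ℝ :=
    fun k1 k2 k3 k4 => ∫ ω, W k1 k2 ω * W k3 k4 ω ∂μ with htdef
  set c : Fin R → Fin R → Fin d → Fin d → Fin d → Fin d → ℝ :=
    fun j j' k1 k2 k3 k4 => ∫ ω, A ω k1 j * A ω k2 j * A ω k3 j' * A ω k4 j' ∂μ with hcdef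
  -- integrability of each term of the expansion
  have hFint : ∀ (j j' : Fin R) (k1 k2 k3 k4 : Fin d),
      Integrable (fun ω => (W k1 k2 ω * W k3 k4 ω) *
        (A ω k1 j * A ω k2 j * A ω k3 j' * A ω k4 j')) μ := by
    intro j j' k1 k2 k3 k4
    refine Integrable.mono' hBint (((hWm k1 k2).mul (hWm k3 k4)).mul
      ((((hAmeas k1 j).mul (hAmeas k2 j)).mul (hAmeas k3 j')).mul (hAmeas k4 j'))).aestronglyMeasurable ?_
    filter_upwards [rad_abs_le hXsq (k1, j), rad_abs_le hXsq (k2, j), rad_abs_le hXsq (k3, j'),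
      rad_abs_le hXsq (k4, j')] with ω h1 h2 h3 h4
    rw [Real.norm_eq_abs, abs_mul]
    calc |W k1 k2 ω * W k3 k4 ω| * |A ω k1 j * A ω k2 j * A ω k3 j' * A ω k4 j'|
        ≤ ((∑ i, ∑ j, (B ω i j) ^ 2) ^ 2) * 1 :=
          mul_le_mul (hWW k1 k2 k3 k4 ω) (rad_aux_abs4 h1 h2 h3 h4) (abs_nonneg _)
            (sq_nonneg _)
      _ = (∑ i, ∑ j, (B ω i j) ^ 2) ^ 2 := mul_one _
  -- split each term by independence
  have hsplit : ∀ (j j' : Fin R) (k1 k2 k3 k4 : Fin d),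
      ∫ ω, (W k1 k2 ω * W k3 k4 ω) * (A ω k1 j * A ω k2 j * A ω k3 j' * A ω k4 j') ∂μ
        = t k1 k2 k3 k4 * c j j' k1 k2 k3 k4 := by
    intro j j' k1 k2 k3 k4
    have hent : ∀ (i : Fin p) (k : Fin d), Measurable (fun g : Fin p → Fin d → ℝ => g i k) :=
      fun i k => (measurable_pi_apply k).comp (measurable_pi_apply i)
    have hφ : Measurable (fun g : Fin p → Fin d → ℝ =>
        (∑ i, g i k1 * g i k2) * (∑ i, g i k3 * g i k4)) :=
      (Finset.measurable_sum _ fun i _ => (hent i k1).mul (hent i k2)).mul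
        (Finset.measurable_sum _ fun i _ => (hent i k3).mul (hent i k4))
    have hψ : Measurable (fun g : Fin d → Fin R → ℝ =>
        g k1 j * g k2 j * g k3 j' * g k4 j') := by
      have he : ∀ (k : Fin d) (j0 : Fin R), Measurable (fun g : Fin d → Fin R → ℝ => g k j0) :=
        fun k j0 => (measurable_pi_apply j0).comp (measurable_pi_apply k)
      exact (((he k1 j).mul (he k2 j)).mul (he k3 j')).mul (he k4 j')
    have hAmeas' : Measurable A :=
      measurable_pi_lambda _ fun k => measurable_pi_lambda _ fun j0 => hAmeas k j0
    have hind : IndepFun ((fun g : Fin p → Fin d → ℝ =>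
        (∑ i, g i k1 * g i k2) * (∑ i, g i k3 * g i k4)) ∘ B)
        ((fun g : Fin d → Fin R → ℝ => g k1 j * g k2 j * g k3 j' * g k4 j') ∘ A) μ :=
      hAB.symm.comp hφ hψ
    have h := hind.integral_mul_eq_mul_integral (hφ.comp hBmeas).aestronglyMeasurable
      (hψ.comp hAmeas').aestronglyMeasurable
    exact h
  -- the pointwise expansion
  have hpt : ∀ ω, (∑ i, ∑ j, ((Matrix.of (B ω) * Matrix.of (A ω)) i j) ^ 2) ^ 2
      = ∑ j, ∑ j', ∑ k1, ∑ k2, ∑ k3, ∑ k4,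
          (W k1 k2 ω * W k3 k4 ω) * (A ω k1 j * A ω k2 j * A ω k3 j' * A ω k4 j') := by
    intro ω
    have hmulapp : ∀ i j, (Matrix.of (B ω) * Matrix.of (A ω)) i j
        = ∑ k, B ω i k * A ω k j := by
      intro i j; rw [Matrix.mul_apply]; rfl
    calc (∑ i, ∑ j, ((Matrix.of (B ω) * Matrix.of (A ω)) i j) ^ 2) ^ 2
        = (∑ i, ∑ j, (∑ k, B ω i k * A ω k j) ^ 2) ^ 2 :=
          congrArg (· ^ 2) (Finset.sum_congr rfl fun i _ => Finset.sum_congr rfl fun j _ => by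
            rw [hmulapp i j])
      _ = _ := expand_frob p d R (B ω) (A ω)
  -- interchange integral and sums
  have hI5 : ∀ (j j' : Fin R) (k1 k2 k3 : Fin d), Integrable (fun ω => ∑ k4,
      (W k1 k2 ω * W k3 k4 ω) * (A ω k1 j * A ω k2 j * A ω k3 j' * A ω k4 j')) μ :=
    fun j j' k1 k2 k3 => integrable_finset_sum _ fun k4 _ => hFint j j' k1 k2 k3 k4
  have hI4 : ∀ (j j' : Fin R) (k1 k2 : Fin d), Integrable (fun ω => ∑ k3, ∑ k4,
      (W k1 k2 ω * W k3 k4 ω) * (A ω k1 j * A ω k2 j * A ω k3 j' * A ω k4 j')) μ :=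
    fun j j' k1 k2 => integrable_finset_sum _ fun k3 _ => hI5 j j' k1 k2 k3
  have hI3 : ∀ (j j' : Fin R) (k1 : Fin d), Integrable (fun ω => ∑ k2, ∑ k3, ∑ k4,
      (W k1 k2 ω * W k3 k4 ω) * (A ω k1 j * A ω k2 j * A ω k3 j' * A ω k4 j')) μ :=
    fun j j' k1 => integrable_finset_sum _ fun k2 _ => hI4 j j' k1 k2
  have hI2 : ∀ (j j' : Fin R), Integrable (fun ω => ∑ k1, ∑ k2, ∑ k3, ∑ k4,
      (W k1 k2 ω * W k3 k4 ω) * (A ω k1 j * A ω k2 j * A ω k3 j' * A ω k4 j')) μ :=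
    fun j j' => integrable_finset_sum _ fun k1 _ => hI3 j j' k1
  have hI1 : ∀ (j : Fin R), Integrable (fun ω => ∑ j', ∑ k1, ∑ k2, ∑ k3, ∑ k4,
      (W k1 k2 ω * W k3 k4 ω) * (A ω k1 j * A ω k2 j * A ω k3 j' * A ω k4 j')) μ :=
    fun j => integrable_finset_sum _ fun j' _ => hI2 j j'
  have hLHS : ∫ ω, (∑ i, ∑ j, ((Matrix.of (B ω) * Matrix.of (A ω)) i j) ^ 2) ^ 2 ∂μ
      = ∑ j, ∑ j', ∑ k1, ∑ k2, ∑ k3, ∑ k4, t k1 k2 k3 k4 * c j j' k1 k2 k3 k4 := by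
    calc ∫ ω, (∑ i, ∑ j, ((Matrix.of (B ω) * Matrix.of (A ω)) i j) ^ 2) ^ 2 ∂μ
        = ∫ ω, ∑ j, ∑ j', ∑ k1, ∑ k2, ∑ k3, ∑ k4,
            (W k1 k2 ω * W k3 k4 ω) * (A ω k1 j * A ω k2 j * A ω k3 j' * A ω k4 j') ∂μ := by
          congr 1; funext ω; exact hpt ω
      _ = ∑ j, ∫ ω, ∑ j', ∑ k1, ∑ k2, ∑ k3, ∑ k4,
            (W k1 k2 ω * W k3 k4 ω) * (A ω k1 j * A ω k2 j * A ω k3 j' * A ω k4 j') ∂μ :=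
          integral_finset_sum _ fun j _ => hI1 j
      _ = ∑ j, ∑ j', ∑ k1, ∑ k2, ∑ k3, ∑ k4, t k1 k2 k3 k4 * c j j' k1 k2 k3 k4 := by
          refine Finset.sum_congr rfl fun j _ => ?_
          rw [integral_finset_sum _ fun j' _ => hI2 j j']
          refine Finset.sum_congr rfl fun j' _ => ?_
          rw [integral_finset_sum _ fun k1 _ => hI3 j j' k1]
          refine Finset.sum_congr rfl fun k1 _ => ?_
          rw [integral_finset_sum _ fun k2 _ => hI4 j j' k1 k2]
          refine Finset.sum_congr rfl fun k2 _ => ?_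
          rw [integral_finset_sum _ fun k3 _ => hI5 j j' k1 k2 k3]
          refine Finset.sum_congr rfl fun k3 _ => ?_
          rw [integral_finset_sum _ fun k4 _ => hFint j j' k1 k2 k3 k4]
          exact Finset.sum_congr rfl fun k4 _ => hsplit j j' k1 k2 k3 k4
  -- symmetry and nonnegativity of t
  have hWsymm : ∀ k1 k2, W k1 k2 = W k2 k1 := fun k1 k2 => funext fun ω =>
    Finset.sum_congr rfl fun i _ => mul_comm _ _
  have ht1 : ∀ k1 k3, 0 ≤ t k1 k1 k3 k3 := fun k1 k3 => integral_nonneg fun ω =>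
    mul_nonneg (Finset.sum_nonneg fun i _ => mul_self_nonneg _)
      (Finset.sum_nonneg fun i _ => mul_self_nonneg _)
  have ht2 : ∀ k1 k2, 0 ≤ t k1 k2 k1 k2 := fun k1 k2 => integral_nonneg fun ω =>
    mul_self_nonneg _
  have ht32 : ∀ k1 k2, t k1 k2 k2 k1 = t k1 k2 k1 k2 := by
    intro k1 k2
    simp only [htdef]
    rw [hWsymm k2 k1]
  have ht3 : ∀ k1 k2, 0 ≤ t k1 k2 k2 k1 := fun k1 k2 => (ht32 k1 k2) ▸ ht2 k1 k2
  -- c is at most one, and vanishes unless a pairing occurs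
  have hcle : ∀ (j j' : Fin R) (k1 k2 k3 k4 : Fin d), c j j' k1 k2 k3 k4 ≤ 1 :=
    fun j j' k1 k2 k3 k4 => rad_quad_le_one hXmeas hXsq (k1, j) (k2, j) (k3, j') (k4, j')
  have hczero : ∀ (j j' : Fin R) (k1 k2 k3 k4 : Fin d), ¬(k1 = k2 ∧ k3 = k4) →
      ¬(j = j' ∧ k1 = k3 ∧ k2 = k4) → ¬(j = j' ∧ k1 = k4 ∧ k2 = k3) →
      c j j' k1 k2 k3 k4 = 0 := by
    intro j j' k1 k2 k3 k4 hp1 hp2 hp3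
    refine rad_key_zero hXmeas hAiid hXsq hXmean (k1, j) (k2, j) (k3, j') (k4, j') ?_ ?_ ?_
    · rintro ⟨ha, hb⟩
      simp only [Prod.mk.injEq] at ha hb
      exact hp1 ⟨ha.1, hb.1⟩
    · rintro ⟨ha, hb⟩
      simp only [Prod.mk.injEq] at ha hb
      exact hp2 ⟨ha.2, ha.1, hb.1⟩
    · rintro ⟨ha, hb⟩
      simp only [Prod.mk.injEq] at ha hb
      exact hp3 ⟨ha.2, ha.1, hb.1⟩
  have hind01 : ∀ (P : Prop) [Decidable P], (0:ℝ) ≤ if P then 1 else 0 := by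
    intro P _; split_ifs <;> norm_num
  -- the termwise bound
  have hkey : ∀ (j j' : Fin R) (k1 k2 k3 k4 : Fin d),
      t k1 k2 k3 k4 * c j j' k1 k2 k3 k4
        ≤ t k1 k2 k3 k4 * ((if k1 = k2 then (1:ℝ) else 0) * (if k3 = k4 then (1:ℝ) else 0))
          + t k1 k2 k3 k4 * ((if j = j' then (1:ℝ) else 0) *
              ((if k1 = k3 then (1:ℝ) else 0) * (if k2 = k4 then (1:ℝ) else 0)))
          + t k1 k2 k3 k4 * ((if j = j' then (1:ℝ) else 0) *
              ((if k1 = k4 then (1:ℝ) else 0) * (if k2 = k3 then (1:ℝ) else 0))) := by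
    intro j j' k1 k2 k3 k4
    by_cases hp1 : k1 = k2 ∧ k3 = k4
    · obtain ⟨h12, h34⟩ := hp1
      subst h12; subst h34
      have h0 := ht1 k1 k3
      have hc1 := hcle j j' k1 k1 k3 k3
      have he2 : (0:ℝ) ≤ (if j = j' then (1:ℝ) else 0) *
          ((if k1 = k3 then (1:ℝ) else 0) * (if k1 = k3 then (1:ℝ) else 0)) :=
        mul_nonneg (hind01 _) (mul_nonneg (hind01 _) (hind01 _))
      have he3 : (0:ℝ) ≤ (if j = j' then (1:ℝ) else 0) *
          ((if k1 = k3 then (1:ℝ) else 0) * (if k1 = k3 then (1:ℝ) else 0)) :=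
        mul_nonneg (hind01 _) (mul_nonneg (hind01 _) (hind01 _))
      simp only [eq_self_iff_true, if_true]
      nlinarith [mul_le_mul_of_nonneg_left hc1 h0, mul_nonneg h0 he2, mul_nonneg h0 he3]
    by_cases hp2 : j = j' ∧ k1 = k3 ∧ k2 = k4
    · obtain ⟨hjj, h13, h24⟩ := hp2
      subst hjj; subst h13; subst h24
      have h0 := ht2 k1 k2
      have hc1 := hcle j j k1 k2 k1 k2
      have he1 : (0:ℝ) ≤ (if k1 = k2 then (1:ℝ) else 0) * (if k1 = k2 then (1:ℝ) else 0) :=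
        mul_nonneg (hind01 _) (hind01 _)
      have he3 : (0:ℝ) ≤ (if k1 = k2 then (1:ℝ) else 0) * (if k2 = k1 then (1:ℝ) else 0) :=
        mul_nonneg (hind01 _) (hind01 _)
      simp only [eq_self_iff_true, if_true]
      nlinarith [mul_le_mul_of_nonneg_left hc1 h0, mul_nonneg h0 he1, mul_nonneg h0 he3]
    by_cases hp3 : j = j' ∧ k1 = k4 ∧ k2 = k3
    · obtain ⟨hjj, h14, h23⟩ := hp3
      subst hjj; subst h14; subst h23
      have h0 := ht3 k1 k2
      have hc1 := hcle j j k1 k2 k2 k1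
      have he1 : (0:ℝ) ≤ (if k1 = k2 then (1:ℝ) else 0) * (if k2 = k1 then (1:ℝ) else 0) :=
        mul_nonneg (hind01 _) (hind01 _)
      have he2 : (0:ℝ) ≤ (if k1 = k2 then (1:ℝ) else 0) * (if k2 = k1 then (1:ℝ) else 0) :=
        mul_nonneg (hind01 _) (hind01 _)
      simp only [eq_self_iff_true, if_true]
      nlinarith [mul_le_mul_of_nonneg_left hc1 h0, mul_nonneg h0 he1, mul_nonneg h0 he2]
    · have hc0 := hczero j j' k1 k2 k3 k4 hp1 hp2 hp3
      have he1 : (if k1 = k2 then (1:ℝ) else 0) * (if k3 = k4 then (1:ℝ) else 0) = 0 := by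
        rcases not_and_or.mp hp1 with h | h <;> simp [h]
      have he2 : (if j = j' then (1:ℝ) else 0) *
          ((if k1 = k3 then (1:ℝ) else 0) * (if k2 = k4 then (1:ℝ) else 0)) = 0 := by
        rcases not_and_or.mp hp2 with h | h
        · simp [h]
        · rcases not_and_or.mp h with h' | h' <;> simp [h']
      have he3 : (if j = j' then (1:ℝ) else 0) *
          ((if k1 = k4 then (1:ℝ) else 0) * (if k2 = k3 then (1:ℝ) else 0)) = 0 := by
        rcases not_and_or.mp hp3 with h | h
        · simp [h]
        · rcases not_and_or.mp h with h' | h' <;> simp [h']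
      rw [hc0, he1, he2, he3]
      simp
  -- evaluating the three indicator sums
  have hSum1 : ∑ j : Fin R, ∑ j' : Fin R, ∑ k1, ∑ k2, ∑ k3, ∑ k4, t k1 k2 k3 k4 *
      ((if k1 = k2 then (1:ℝ) else 0) * (if k3 = k4 then (1:ℝ) else 0))
      = (R:ℝ) ^ 2 * ∑ k1, ∑ k3, t k1 k1 k3 k3 := by
    simp only [mul_ite, mul_one, mul_zero, ite_mul, zero_mul, one_mul,
      Finset.sum_ite_irrel, Finset.sum_ite_eq, Finset.mem_univ, if_true,
      Finset.sum_const_zero, Finset.sum_const, Finset.card_univ, Fintype.card_fin,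
      nsmul_eq_mul]
    ring
  have hSum2 : ∑ j : Fin R, ∑ j' : Fin R, ∑ k1, ∑ k2, ∑ k3, ∑ k4, t k1 k2 k3 k4 *
      ((if j = j' then (1:ℝ) else 0) *
        ((if k1 = k3 then (1:ℝ) else 0) * (if k2 = k4 then (1:ℝ) else 0)))
      = (R:ℝ) * ∑ k1, ∑ k2, t k1 k2 k1 k2 := by
    simp only [mul_ite, mul_one, mul_zero, ite_mul, zero_mul, one_mul,
      Finset.sum_ite_irrel, Finset.sum_ite_eq, Finset.mem_univ, if_true,
      Finset.sum_const_zero, Finset.sum_const, Finset.card_univ, Fintype.card_fin,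
      nsmul_eq_mul]
  have hSum3 : ∑ j : Fin R, ∑ j' : Fin R, ∑ k1, ∑ k2, ∑ k3, ∑ k4, t k1 k2 k3 k4 *
      ((if j = j' then (1:ℝ) else 0) *
        ((if k1 = k4 then (1:ℝ) else 0) * (if k2 = k3 then (1:ℝ) else 0)))
      = (R:ℝ) * ∑ k1, ∑ k2, t k1 k2 k2 k1 := by
    simp only [mul_ite, mul_one, mul_zero, ite_mul, zero_mul, one_mul,
      Finset.sum_ite_irrel, Finset.sum_ite_eq, Finset.mem_univ, if_true,
      Finset.sum_const_zero, Finset.sum_const, Finset.card_univ, Fintype.card_fin,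
      nsmul_eq_mul]
  -- expressing the collapsed sums as integrals
  have hS1' : ∑ k1, ∑ k3, t k1 k1 k3 k3 = ∫ ω, (∑ k, W k k ω) ^ 2 ∂μ := by
    calc ∑ k1, ∑ k3, t k1 k1 k3 k3
        = ∑ k1, ∫ ω, ∑ k3, W k1 k1 ω * W k3 k3 ω ∂μ :=
          Finset.sum_congr rfl fun k1 _ =>
            (integral_finset_sum _ fun k3 _ => hGint k1 k1 k3 k3).symm
      _ = ∫ ω, ∑ k1, ∑ k3, W k1 k1 ω * W k3 k3 ω ∂μ :=
          (integral_finset_sum _ fun k1 _ =>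
            integrable_finset_sum _ fun k3 _ => hGint k1 k1 k3 k3).symm
      _ = ∫ ω, (∑ k, W k k ω) ^ 2 ∂μ := by
          congr 1; funext ω
          rw [sq, Finset.sum_mul_sum]
  have hS2' : ∑ k1, ∑ k2, t k1 k2 k1 k2 = ∫ ω, ∑ k1, ∑ k2, W k1 k2 ω * W k1 k2 ω ∂μ := by
    calc ∑ k1, ∑ k2, t k1 k2 k1 k2
        = ∑ k1, ∫ ω, ∑ k2, W k1 k2 ω * W k1 k2 ω ∂μ :=
          Finset.sum_congr rfl fun k1 _ =>
            (integral_finset_sum _ fun k2 _ => hGint k1 k2 k1 k2).symm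
      _ = ∫ ω, ∑ k1, ∑ k2, W k1 k2 ω * W k1 k2 ω ∂μ :=
          (integral_finset_sum _ fun k1 _ =>
            integrable_finset_sum _ fun k2 _ => hGint k1 k2 k1 k2).symm
  have hS3' : ∑ k1, ∑ k2, t k1 k2 k2 k1 = ∫ ω, ∑ k1, ∑ k2, W k1 k2 ω * W k1 k2 ω ∂μ := by
    rw [← hS2']
    exact Finset.sum_congr rfl fun k1 _ => Finset.sum_congr rfl fun k2 _ => ht32 k1 k2
  -- identifying the traces
  have htr1 : ∫ ω, (Matrix.trace ((Matrix.of (B ω))ᵀ * Matrix.of (B ω))) ^ 2 ∂μ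
      = ∫ ω, (∑ k, W k k ω) ^ 2 ∂μ := by
    have hper : ∀ ω, Matrix.trace ((Matrix.of (B ω))ᵀ * Matrix.of (B ω)) = ∑ k, W k k ω := by
      intro ω
      simp [Matrix.trace, Matrix.diag, Matrix.mul_apply, Matrix.transpose_apply, hWdef]
    refine integral_congr_ae (Filter.Eventually.of_forall fun ω => ?_)
    show (Matrix.trace ((Matrix.of (B ω))ᵀ * Matrix.of (B ω))) ^ 2 = (∑ k, W k k ω) ^ 2
    rw [hper ω]
  have htr2 : ∫ ω, Matrix.trace (((Matrix.of (B ω))ᵀ * Matrix.of (B ω)) ^ 2) ∂μ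
      = ∫ ω, ∑ k1, ∑ k2, W k1 k2 ω * W k1 k2 ω ∂μ := by
    congr 1; funext ω
    rw [sq]
    simp only [Matrix.trace, Matrix.diag_apply, Matrix.mul_apply, Matrix.transpose_apply,
      Matrix.of_apply, hWdef]
    refine Finset.sum_congr rfl fun k1 _ => Finset.sum_congr rfl fun k2 _ => ?_
    have h : (∑ i, B ω i k2 * B ω i k1) = ∑ i, B ω i k1 * B ω i k2 :=
      Finset.sum_congr rfl fun i _ => mul_comm _ _
    rw [h]
  -- final assembly
  rw [hLHS, htr1, htr2]
  calc ∑ j, ∑ j', ∑ k1, ∑ k2, ∑ k3, ∑ k4, t k1 k2 k3 k4 * c j j' k1 k2 k3 k4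
      ≤ ∑ j : Fin R, ∑ j' : Fin R, ∑ k1, ∑ k2, ∑ k3, ∑ k4,
          (t k1 k2 k3 k4 * ((if k1 = k2 then (1:ℝ) else 0) * (if k3 = k4 then (1:ℝ) else 0))
          + t k1 k2 k3 k4 * ((if j = j' then (1:ℝ) else 0) *
              ((if k1 = k3 then (1:ℝ) else 0) * (if k2 = k4 then (1:ℝ) else 0)))
          + t k1 k2 k3 k4 * ((if j = j' then (1:ℝ) else 0) *
              ((if k1 = k4 then (1:ℝ) else 0) * (if k2 = k3 then (1:ℝ) else 0)))) := by
        refine Finset.sum_le_sum fun j _ => Finset.sum_le_sum fun j' _ =>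
          Finset.sum_le_sum fun k1 _ => Finset.sum_le_sum fun k2 _ =>
          Finset.sum_le_sum fun k3 _ => Finset.sum_le_sum fun k4 _ => hkey j j' k1 k2 k3 k4
    _ = (R:ℝ) ^ 2 * ∑ k1, ∑ k3, t k1 k1 k3 k3 + ((R:ℝ) * ∑ k1, ∑ k2, t k1 k2 k1 k2
        + (R:ℝ) * ∑ k1, ∑ k2, t k1 k2 k2 k1) := by
        simp only [Finset.sum_add_distrib]
        rw [hSum1, hSum2, hSum3]
        ring
    _ = (R:ℝ) ^ 2 * (∫ ω, (∑ k, W k k ω) ^ 2 ∂μ)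
        + 2 * (R:ℝ) * (∫ ω, ∑ k1, ∑ k2, W k1 k2 ω * W k1 k2 ω ∂μ) := by
        rw [hS1', hS2', hS3']; ring


end
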